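/- Let g be a finite-dimensional Lie algebra over a field k of characteristic zero, A a commutative associative unital k-algebra, and Γ a finite group acting on g and A. If the fixed-point subalgebra g^Γ satisfies [g^Γ, g] = g, then the equivariant map Lie algebra M = (g ⊗ A)^Γ is perfect, i.e. [M, M] = M. -/

import Mathlib

open TensorProduct

section aux

variable {k : Type*} [Field k]
    {A : Type*} [CommRing A] [Algebra k A]
    {g : Type*} [LieRing g] [LieAlgebra k g]
    {Γ : Type*} [Group Γ] [Fintype Γ]
    (φ : Γ →* (g ≃ₗ[k] g)) (hφ : ∀ (γ : Γ) (x y : g), φ γ ⁅x, y⁆ = ⁅φ γ x, φ γ y⁆)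
    (ψ : Γ →* (A ≃ₐ[k] A))
    (d : Γ → (A ⊗[k] g) ≃ₗ[k] (A ⊗[k] g))
    (hd : ∀ (γ : Γ) (a : A) (x : g), d γ (a ⊗ₜ[k] x) = (ψ γ a) ⊗ₜ[k] (φ γ x))

omit [Fintype Γ] in include hd in
lemma d_mul (γ δ : Γ) (u : A ⊗[k] g) : d γ (d δ u) = d (γ * δ) u := by
  induction u using TensorProduct.induction_on with
  | zero => simp
  | tmul a x =>
    rw [hd, hd, hd, map_mul, map_mul]
    rfl
  | add u v hu hv => simp [map_add, hu, hv]

omit [Fintype Γ] in include hφ hd in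
lemma d_bracket (γ : Γ) (u v : A ⊗[k] g) : d γ ⁅u, v⁆ = ⁅d γ u, d γ v⁆ := by
  induction u using TensorProduct.induction_on with
  | zero => simp
  | add u₁ u₂ h₁ h₂ => simp only [add_lie, map_add, h₁, h₂]
  | tmul a x =>
    induction v using TensorProduct.induction_on with
    | zero => simp
    | add v₁ v₂ h₁ h₂ => simp only [lie_add, map_add, h₁, h₂]
    | tmul b y =>
      rw [LieAlgebra.ExtendScalars.bracket_tmul, hd, hd, hd,
        LieAlgebra.ExtendScalars.bracket_tmul, map_mul, hφ]

omit [Fintype Γ] in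
lemma lie_sum' {L : Type*} [LieRing L] {ι : Type*} (s : Finset ι) (w : L) (f : ι → L) :
    ⁅w, ∑ i ∈ s, f i⁆ = ∑ i ∈ s, ⁅w, f i⁆ := by
  classical
  induction s using Finset.induction_on with
  | empty => simp
  | insert _ _ h ih => rw [Finset.sum_insert h, Finset.sum_insert h, lie_add, ih]

end aux

/-- If `g` is a finite-dimensional Lie algebra over a field `k` of
characteristic zero, `A` a commutative associative unital `k`-algebra, `Γ` a finite group
acting on `g` and `A`, and `[g^Γ, g] = g`, then the equivariant map Lie algebra
`M = (g ⊗ A)^Γ` is perfect, i.e. `[M, M] = M`.  (Here `g ⊗ A` is realized as `A ⊗[k] g`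
with bracket `⁅a ⊗ x, b ⊗ y⁆ = (a b) ⊗ ⁅x, y⁆`.) -/
theorem stmt10 (k : Type*) [Field k] [CharZero k]
    (A : Type*) [CommRing A] [Algebra k A]
    (g : Type*) [LieRing g] [LieAlgebra k g] [FiniteDimensional k g]
    (Γ : Type*) [Group Γ] [Fintype Γ]
    (φ : Γ →* (g ≃ₗ[k] g)) (hφ : ∀ (γ : Γ) (x y : g), φ γ ⁅x, y⁆ = ⁅φ γ x, φ γ y⁆)
    (ψ : Γ →* (A ≃ₐ[k] A))
    (d : Γ → (A ⊗[k] g) ≃ₗ[k] (A ⊗[k] g))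
    (hd : ∀ (γ : Γ) (a : A) (x : g), d γ (a ⊗ₜ[k] x) = (ψ γ a) ⊗ₜ[k] (φ γ x))
    (Mfix : Submodule k (A ⊗[k] g)) (hMfix : ∀ u, u ∈ Mfix ↔ ∀ γ : Γ, d γ u = u)
    (hgen : Submodule.span k
      {z : g | ∃ a b : g, (∀ γ : Γ, φ γ a = a) ∧ z = ⁅a, b⁆} = ⊤) :
    Submodule.span k {z : A ⊗[k] g | ∃ u ∈ Mfix, ∃ v ∈ Mfix, z = ⁅u, v⁆} = Mfix := by
  set S : Set (A ⊗[k] g) := {z : A ⊗[k] g | ∃ u ∈ Mfix, ∃ v ∈ Mfix, z = ⁅u, v⁆} with hS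
  -- the averaging (unnormalized) operator
  set T : (A ⊗[k] g) →ₗ[k] (A ⊗[k] g) := ∑ γ : Γ, (d γ).toLinearMap with hT
  have hTapp : ∀ u, T u = ∑ γ : Γ, d γ u := by
    intro u; simp [hT, LinearMap.sum_apply]
  have hTfix : ∀ u, T u ∈ Mfix := by
    intro u
    rw [hMfix]
    intro γ
    rw [hTapp, map_sum]
    rw [show (∑ δ : Γ, d γ (d δ u)) = ∑ δ : Γ, d (γ * δ) u from
      Finset.sum_congr rfl fun δ _ => d_mul φ ψ d hd γ δ u]
    exact Fintype.sum_equiv (Equiv.mulLeft γ) _ _ (fun δ => rfl)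
  have hTid : ∀ u ∈ Mfix, T u = (Fintype.card Γ : k) • u := by
    intro u hu
    rw [hTapp]
    rw [Finset.sum_congr rfl fun γ _ => (hMfix u).1 hu γ]
    simp [Nat.cast_smul_eq_nsmul k]
  have hcard : (Fintype.card Γ : k) ≠ 0 := by
    exact_mod_cast Nat.cast_ne_zero.2 Fintype.card_ne_zero
  apply le_antisymm
  · rw [Submodule.span_le]
    rintro z ⟨u, hu, v, hv, rfl⟩
    rw [SetLike.mem_coe, hMfix]
    intro γ
    rw [d_bracket φ hφ ψ d hd, (hMfix u).1 hu, (hMfix v).1 hv]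
  · intro m hm
    have hmT : m = (Fintype.card Γ : k)⁻¹ • T m := by
      rw [hTid m hm, smul_smul, inv_mul_cancel₀ hcard, one_smul]
    rw [hmT]
    refine Submodule.smul_mem _ _ ?_
    -- show T u ∈ span k S for all u
    have key : ∀ u : A ⊗[k] g, T u ∈ Submodule.span k S := by
      intro u
      induction u using TensorProduct.induction_on with
      | zero => simp
      | add u v hu hv => rw [map_add]; exact Submodule.add_mem _ hu hv
      | tmul c x =>
        -- consider the linear map g → A⊗g, x ↦ T (c ⊗ x)
        have : x ∈ (Submodule.span k S).comap
            (T ∘ₗ (TensorProduct.mk k A g c)) := by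
          have htop : (⊤ : Submodule k g) ≤ (Submodule.span k S).comap
              (T ∘ₗ (TensorProduct.mk k A g c)) := by
            rw [← hgen, Submodule.span_le]
            rintro z ⟨a, b, ha, rfl⟩
            simp only [Submodule.mem_comap, LinearMap.comp_apply,
              TensorProduct.mk_apply, SetLike.mem_coe]
            have h1a : (1 : A) ⊗ₜ[k] a ∈ Mfix := by
              rw [hMfix]; intro γ; rw [hd, ha, map_one]
            have hbr : c ⊗ₜ[k] ⁅a, b⁆ = ⁅(1 : A) ⊗ₜ[k] a, c ⊗ₜ[k] b⁆ := by
              rw [LieAlgebra.ExtendScalars.bracket_tmul, one_mul]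
            rw [hbr, hTapp]
            have : (∑ γ : Γ, d γ ⁅(1 : A) ⊗ₜ[k] a, c ⊗ₜ[k] b⁆)
                = ⁅(1 : A) ⊗ₜ[k] a, T (c ⊗ₜ[k] b)⁆ := by
              rw [hTapp, lie_sum']
              refine Finset.sum_congr rfl fun γ _ => ?_
              rw [d_bracket φ hφ ψ d hd, (hMfix _).1 h1a γ]
            rw [this]
            exact Submodule.subset_span ⟨_, h1a, _, hTfix _, rfl⟩
          exact htop trivial
        simpa using this
    exact key m
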